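/- arXiv:2103.14436 — 2 statements merged into one kernel-verified Lean document; each statement's English description precedes it below -/
import Mathlib

section
/- Let G=(V,E,w) be a finite weighted directed graph and e∈E a directed edge. Then the partition function satisfies the deletion–contraction identity Z_G(q) = Z_{G−e}(q) + w(e)·Z_{G/e}(q) for all q>0, where G−e is the graph with edge e removed and G/e is the directed e-contraction of G. -/
open Classical Finset Filter

noncomputable section

variable {V : Type*} [Fintype V] [DecidableEq V]

/-- One step of following the parent map of a rooted forest. -/
def fstep (f : V → Option V) : Option V → Option V := fun o => o.bind f

/-- `f : V → Option V` encodes a spanning rooted forest structure: every vertex either is a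
root (`f x = none`) or points to its parent, and iterating the parent map from any vertex
eventually reaches a root (i.e. there are no cycles). -/
def IsForest (f : V → Option V) : Prop :=
  ∀ x : V, ∃ n : ℕ, (fstep f)^[n] (some x) = none

/-- `f` is a spanning rooted forest of the directed graph with edge relation `E`:
all its (parent-pointing) edges are edges of the graph. -/
def IsRForest (E : V → V → Prop) (f : V → Option V) : Prop :=
  IsForest f ∧ ∀ x y : V, f x = some y → E x y

/-- The number of roots (equivalently, of trees) of a rooted forest. -/
def nRoots (f : V → Option V) : ℕ := (univ.filter fun x : V => f x = none).card

/-- The weight `w(F) = ∏_{e ∈ F} w(e)` of a rooted forest. -/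
def fWeight (w : V → V → ℝ) (f : V → Option V) : ℝ :=
  ∏ x : V, (f x).elim 1 (fun y => w x y)

/-- Non-normalised forest measure of a set `H` of forests: `∑_{F ∈ H} q^{r(F)} w(F)`,
the sum running over spanning rooted forests of the graph belonging to `H`. -/
def fMeasure (E : V → V → Prop) (w : V → V → ℝ) (q : ℝ) (H : Set (V → Option V)) : ℝ :=
  ∑ f ∈ univ.filter (fun f : V → Option V => IsRForest E f ∧ f ∈ H),
    q ^ nRoots f * fWeight w f

/-- Partition function `Z(q) = ∑_F q^{r(F)} w(F)`. -/
def Zf (E : V → V → Prop) (w : V → V → ℝ) (q : ℝ) : ℝ := fMeasure E w q Set.univ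

/-- Probability `P(Φ_q ∈ H)` for the random spanning rooted forest `Φ_q`. -/
def fProb (E : V → V → Prop) (w : V → V → ℝ) (q : ℝ) (H : Set (V → Option V)) : ℝ :=
  fMeasure E w q H / Zf E w q

/-- Ancestor relation in the forest `f`. -/
def anc (f : V → Option V) : V → V → Prop :=
  Relation.ReflTransGen (fun a b => f a = some b)

/-- `x` and `y` belong to the same tree of the forest `f` (they have a common ancestor). -/
def SameTree (f : V → Option V) (x y : V) : Prop := ∃ z, anc f x z ∧ anc f y z

/-- Two-point correlation `U_q(x,y)`: the probability that `x` and `y` lie in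
different trees of `Φ_q`. -/
def Ucorr (E : V → V → Prop) (w : V → V → ℝ) (q : ℝ) (x y : V) : ℝ :=
  fProb E w q {f | ¬ SameTree f x y}

end

noncomputable section

variable {V : Type*} [Fintype V] [DecidableEq V]

/-- The directed edge contraction `G/e` over the directed edge `e = (x,y)`:
all outgoing edges of `x` are removed and `x` is merged into `y`
(realised on the vertex set `{v // v ≠ x}`); outgoing edges from `y` and ingoing edges to
both `x` and `y` are retained, the ingoing edges of `x` being redirected to `y`. -/
def contrE (E : V → V → Prop) (x y : V) :
    {v : V // v ≠ x} → {v : V // v ≠ x} → Prop := fun u v =>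
  u ≠ v ∧ (E u.1 v.1 ∨ (E u.1 x ∧ v.1 = y))

/-- The weight function of the directed edge contraction `G/e`, `e = (x,y)`: parallel
edges arising from the contraction are merged by adding their weights. -/
def contrW (E : V → V → Prop) (w : V → V → ℝ) (x y : V) :
    {v : V // v ≠ x} → {v : V // v ≠ x} → ℝ := fun u v =>
  (if E u.1 v.1 ∧ u.1 ≠ v.1 then w u.1 v.1 else 0) +
    (if v.1 = y ∧ E u.1 x then w u.1 x else 0)

set_option linter.unusedSectionVars false
set_option maxHeartbeats 1000000

lemma fstep_some (f : V → Option V) (v : V) : fstep f (some v) = f v := rfl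

lemma iter_none (f : V → Option V) (m : ℕ) : (fstep f)^[m] none = none :=
  Function.iterate_fixed rfl m

lemma iter_absorb {f : V → Option V} {n : ℕ} {o : Option V} (h : (fstep f)^[n] o = none)
    {m : ℕ} (hm : n ≤ m) : (fstep f)^[m] o = none := by
  obtain ⟨k, rfl⟩ := Nat.exists_eq_add_of_le hm
  rw [Nat.add_comm, Function.iterate_add_apply, h, iter_none]

lemma no_periodic {f : V → Option V} (hf : IsForest f) {u : V} {k : ℕ} (hk : k ≠ 0)
    (h : (fstep f)^[k] (some u) = some u) : False := by
  obtain ⟨n, hn⟩ := hf u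
  have hq : ∀ m : ℕ, (fstep f)^[m * k] (some u) = some u := by
    intro m
    induction m with
    | zero => simp
    | succ m ih => rw [Nat.succ_mul, Function.iterate_add_apply, h, ih]
  have h2 : (fstep f)^[n * k] (some u) = none :=
    iter_absorb hn (Nat.le_mul_of_pos_right n (Nat.pos_of_ne_zero hk))
  rw [hq n] at h2
  exact Option.some_ne_none _ h2

lemma no_self {f : V → Option V} (hf : IsForest f) (u : V) : f u ≠ some u := by
  intro h
  exact no_periodic hf one_ne_zero (by simpa [fstep_some] using h)

lemma no_two {f : V → Option V} (hf : IsForest f) {u v : V}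
    (h1 : f u = some v) (h2 : f v = some u) : False := by
  refine no_periodic hf (two_ne_zero) (u := u) ?_
  show (fstep f)^[2] (some u) = some u
  rw [show (2:ℕ) = 1 + 1 from rfl, Function.iterate_add_apply,
    Function.iterate_one, fstep_some, h1, fstep_some, h2]

def hmap (x y : V) (hxy : x ≠ y) : V → {v : V // v ≠ x} := fun v =>
  if hv : v = x then ⟨y, Ne.symm hxy⟩ else ⟨v, hv⟩

lemma hmap_x (x y : V) (hxy : x ≠ y) : hmap x y hxy x = ⟨y, Ne.symm hxy⟩ := dif_pos rfl

lemma hmap_ne (x y : V) (hxy : x ≠ y) {v : V} (hv : v ≠ x) : hmap x y hxy v = ⟨v, hv⟩ :=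
  dif_neg hv

def proj (x y : V) (hxy : x ≠ y) (f : V → Option V) :
    {v : V // v ≠ x} → Option {v : V // v ≠ x} :=
  fun u => (f u.1).map (hmap x y hxy)

lemma proj_forest (x y : V) (hxy : x ≠ y) {f : V → Option V} (hf : IsForest f)
    (hfx : f x = some y) : IsForest (proj x y hxy f) := by
  have key : ∀ n : ℕ, ∀ v : V, ∀ hv : v ≠ x, (fstep f)^[n] (some v) = none →
      ∃ m, (fstep (proj x y hxy f))^[m] (some ⟨v, hv⟩) = none := by
    intro n
    induction n using Nat.strong_induction_on with
    | _ n ih =>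
      intro v hv hn
      match n, hn with
      | 0, hn => exact absurd hn (by simp)
      | Nat.succ n, hn =>
        rw [Function.iterate_succ_apply, fstep_some] at hn
        cases hfv : f v with
        | none =>
          refine ⟨1, ?_⟩
          rw [Function.iterate_one, fstep_some]
          simp [proj, hfv]
        | some u =>
          rw [hfv] at hn
          by_cases hu : u = x
          · rw [hu] at hn hfv
            match n, hn with
            | 0, hn => exact absurd hn (by simp)
            | Nat.succ n, hn =>
              rw [Function.iterate_succ_apply, fstep_some, hfx] at hn
              obtain ⟨m, hm⟩ := ih n (by omega) y (Ne.symm hxy) hn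
              refine ⟨m + 1, ?_⟩
              rw [Function.iterate_succ_apply, fstep_some]
              have h1 : proj x y hxy f ⟨v, hv⟩ = some ⟨y, Ne.symm hxy⟩ := by
                simp [proj, hfv, hmap_x]
              rw [h1]
              exact hm
          · obtain ⟨m, hm⟩ := ih n (by omega) u hu hn
            refine ⟨m + 1, ?_⟩
            rw [Function.iterate_succ_apply, fstep_some]
            have h1 : proj x y hxy f ⟨v, hv⟩ = some ⟨u, hu⟩ := by
              simp [proj, hfv, hmap_ne x y hxy hu]
            rw [h1]
            exact hm
  intro u
  obtain ⟨n, hn⟩ := hf u.1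
  obtain ⟨m, hm⟩ := key n u.1 u.2 hn
  exact ⟨m, hm⟩

lemma lift_forest (x y : V) (hxy : x ≠ y) {f : V → Option V}
    {f' : {v : V // v ≠ x} → Option {v : V // v ≠ x}}
    (hf' : IsForest f') (hfx : f x = some y)
    (hcomp : ∀ u : {v : V // v ≠ x}, (f u.1).map (hmap x y hxy) = f' u) :
    IsForest f := by
  have key : ∀ n : ℕ, ∀ u : {v : V // v ≠ x}, (fstep f')^[n] (some u) = none →
      ∃ m, (fstep f)^[m] (some u.1) = none := by
    intro n
    induction n using Nat.strong_induction_on with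
    | _ n ih =>
      intro u hn
      match n, hn with
      | 0, hn => exact absurd hn (by simp)
      | Nat.succ n, hn =>
        rw [Function.iterate_succ_apply, fstep_some] at hn
        cases hfu : f u.1 with
        | none =>
          exact ⟨1, by rw [Function.iterate_one, fstep_some, hfu]⟩
        | some ww =>
          have hfu' : f' u = some (hmap x y hxy ww) := by rw [← hcomp u, hfu]; rfl
          rw [hfu'] at hn
          obtain ⟨m, hm⟩ := ih n (by omega) _ hn
          by_cases hww : ww = x
          · rw [hww] at hfu
            rw [hww, hmap_x] at hm
            refine ⟨m + 2, ?_⟩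
            rw [show m + 2 = m + 1 + 1 from rfl, Function.iterate_succ_apply, fstep_some, hfu,
              Function.iterate_succ_apply, fstep_some, hfx]
            exact hm
          · rw [hmap_ne x y hxy hww] at hm
            refine ⟨m + 1, ?_⟩
            rw [Function.iterate_succ_apply, fstep_some, hfu]
            exact hm
  intro v
  by_cases hv : v = x
  · subst hv
    obtain ⟨n, hn⟩ := hf' ⟨y, Ne.symm hxy⟩
    obtain ⟨m, hm⟩ := key n _ hn
    exact ⟨m + 1, by rw [Function.iterate_succ_apply, fstep_some, hfx]; exact hm⟩
  · obtain ⟨n, hn⟩ := hf' ⟨v, hv⟩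
    obtain ⟨m, hm⟩ := key n _ hn
    exact ⟨m, hm⟩

lemma prod_elim_eq (w : V → V → ℝ) (q : ℝ) (f : V → Option V) :
    (∏ u : V, (f u).elim q (fun v => w u v)) = q ^ nRoots f * fWeight w f := by
  classical
  unfold nRoots fWeight
  rw [
    ← Finset.prod_filter_mul_prod_filter_not Finset.univ (fun u => f u = none)
      (fun u => (f u).elim q (fun v => w u v)),
    ← Finset.prod_filter_mul_prod_filter_not Finset.univ (fun u => f u = none)
      (fun u => (f u).elim 1 (fun v => w u v))]
  have h1 : ∀ u ∈ Finset.univ.filter (fun u : V => f u = none),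
      (f u).elim q (fun v => w u v) = q := by
    intro u hu; rw [Finset.mem_filter] at hu; rw [hu.2]; rfl
  have h2 : ∀ u ∈ Finset.univ.filter (fun u : V => f u = none),
      (f u).elim 1 (fun v => w u v) = 1 := by
    intro u hu; rw [Finset.mem_filter] at hu; rw [hu.2]; rfl
  rw [Finset.prod_congr rfl h1, Finset.prod_congr rfl h2, Finset.prod_const, Finset.prod_const,
    one_pow, one_mul]
  congr 1
  refine Finset.prod_congr rfl fun u hu => ?_
  rw [Finset.mem_filter] at hu
  cases hfu : f u with
  | none => exact absurd hfu hu.2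
  | some v => rfl

def Ccond (E : V → V → Prop) (x y : V) (hxy : x ≠ y)
    (f' : {v : V // v ≠ x} → Option {v : V // v ≠ x}) (u : V) (o : Option V) : Prop :=
  if hu : u = x then o = some y
  else (o.map (hmap x y hxy) = f' ⟨u, hu⟩ ∧ ∀ v : V, o = some v → E u v)

lemma Ccond_x (E : V → V → Prop) (x y : V) (hxy : x ≠ y)
    (f' : {v : V // v ≠ x} → Option {v : V // v ≠ x}) (o : Option V) :
    Ccond E x y hxy f' x o ↔ o = some y := by
  unfold Ccond
  rw [dif_pos rfl]

lemma Ccond_ne (E : V → V → Prop) (x y : V) (hxy : x ≠ y)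
    (f' : {v : V // v ≠ x} → Option {v : V // v ≠ x}) {u : V} (hu : u ≠ x) (o : Option V) :
    Ccond E x y hxy f' u o ↔
      (o.map (hmap x y hxy) = f' ⟨u, hu⟩ ∧ ∀ v : V, o = some v → E u v) := by
  unfold Ccond
  rw [dif_neg hu]

def gfun (E : V → V → Prop) (w : V → V → ℝ) (q : ℝ) (x y : V) (hxy : x ≠ y)
    (f' : {v : V // v ≠ x} → Option {v : V // v ≠ x}) (u : V) (o : Option V) : ℝ :=
  if Ccond E x y hxy f' u o then o.elim q (fun v => w u v) else 0

lemma fiber_mem (E : V → V → Prop) (x y : V) (hxy : x ≠ y) (hE : E x y)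
    {f' : {v : V // v ≠ x} → Option {v : V // v ≠ x}} (hf' : IsForest f')
    (f : V → Option V) :
    ((IsRForest E f ∧ f x = some y) ∧ proj x y hxy f = f') ↔
      ∀ u : V, Ccond E x y hxy f' u (f u) := by
  constructor
  · rintro ⟨⟨⟨hfor, hedge⟩, hfx⟩, hproj⟩ u
    by_cases hu : u = x
    · rw [hu]
      exact (Ccond_x E x y hxy f' (f x)).mpr hfx
    · rw [Ccond_ne E x y hxy f' hu]
      exact ⟨by rw [← hproj]; rfl, fun v hv => hedge u v hv⟩
  · intro hC
    have hfx : f x = some y := (Ccond_x E x y hxy f' (f x)).mp (hC x)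
    have hco : ∀ u : {v : V // v ≠ x}, (f u.1).map (hmap x y hxy) = f' u := by
      intro u
      exact ((Ccond_ne E x y hxy f' u.2 (f u.1)).mp (hC u.1)).1
    have hedge : ∀ a b : V, f a = some b → E a b := by
      intro a b hab
      by_cases ha : a = x
      · rw [ha] at hab ⊢
        rw [hfx] at hab
        injection hab with hb
        rw [← hb]
        exact hE
      · exact ((Ccond_ne E x y hxy f' ha (f a)).mp (hC a)).2 b hab
    refine ⟨⟨⟨lift_forest x y hxy hf' hfx hco, hedge⟩, hfx⟩, ?_⟩
    funext u
    exact hco u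

lemma prod_gfun (E : V → V → Prop) (w : V → V → ℝ) (q : ℝ) (x y : V) (hxy : x ≠ y)
    (f' : {v : V // v ≠ x} → Option {v : V // v ≠ x}) (f : V → Option V) :
    (∏ u : V, gfun E w q x y hxy f' u (f u))
      = if (∀ u : V, Ccond E x y hxy f' u (f u)) then
          ∏ u : V, (f u).elim q (fun v => w u v) else 0 := by
  by_cases hC : ∀ u : V, Ccond E x y hxy f' u (f u)
  · rw [if_pos hC]
    refine Finset.prod_congr rfl fun u _ => ?_
    unfold gfun
    rw [if_pos (hC u)]
  · rw [if_neg hC]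
    push_neg at hC
    obtain ⟨u, hu⟩ := hC
    refine Finset.prod_eq_zero (Finset.mem_univ u) ?_
    unfold gfun
    rw [if_neg hu]

lemma sum_gfun_x (E : V → V → Prop) (w : V → V → ℝ) (q : ℝ) (x y : V) (hxy : x ≠ y)
    (f' : {v : V // v ≠ x} → Option {v : V // v ≠ x}) :
    (∑ o : Option V, gfun E w q x y hxy f' x o) = w x y := by
  rw [Finset.sum_eq_single (some y)]
  · unfold gfun
    rw [if_pos ((Ccond_x E x y hxy f' (some y)).mpr rfl)]
    rfl
  · intro o _ ho
    unfold gfun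
    rw [if_neg (fun hc => ho ((Ccond_x E x y hxy f' o).mp hc))]
  · intro h
    exact absurd (Finset.mem_univ _) h

lemma sum_gfun_ne (E : V → V → Prop) (w : V → V → ℝ) (q : ℝ) (x y : V) (hxy : x ≠ y)
    {f' : {v : V // v ≠ x} → Option {v : V // v ≠ x}} (hf' : IsForest f')
    {u : V} (hu : u ≠ x) :
    (∑ o : Option V, gfun E w q x y hxy f' u o)
      = (f' ⟨u, hu⟩).elim q (fun v' => contrW E w x y ⟨u, hu⟩ v') := by
  cases hc : f' ⟨u, hu⟩ with
  | none =>
    rw [Finset.sum_eq_single (none : Option V)]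
    · unfold gfun
      rw [if_pos]
      · rfl
      · rw [Ccond_ne E x y hxy f' hu, hc]
        exact ⟨rfl, fun v hv => (Option.some_ne_none _ hv.symm).elim⟩
    · intro o _ ho
      unfold gfun
      rw [if_neg]
      rw [Ccond_ne E x y hxy f' hu, hc]
      rintro ⟨h1, -⟩
      cases o with
      | none => exact ho rfl
      | some v => exact Option.some_ne_none _ h1
    · intro h
      exact absurd (Finset.mem_univ _) h
  | some v0 =>
    obtain ⟨vc, hvc⟩ := v0
    have hself : u ≠ vc := by
      intro h
      apply no_self hf' ⟨u, hu⟩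
      rw [hc]
      exact congrArg some (Subtype.ext h.symm)
    show (∑ o : Option V, gfun E w q x y hxy f' u o) = contrW E w x y ⟨u, hu⟩ ⟨vc, hvc⟩
    by_cases hvy : vc = y
    · have huy : u ≠ y := hvy ▸ hself
      have hpt : ∀ o : Option V, gfun E w q x y hxy f' u o
          = (if o = some y then (if E u y then w u y else 0) else 0)
            + (if o = some x then (if E u x then w u x else 0) else 0) := by
        intro o
        cases o with
        | none =>
          rw [if_neg (show ¬((none : Option V) = some y) from fun h => Option.some_ne_none _ h.symm),
            if_neg (show ¬((none : Option V) = some x) from fun h => Option.some_ne_none _ h.symm),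
            add_zero]
          unfold gfun
          rw [if_neg]
          rw [Ccond_ne E x y hxy f' hu, hc]
          rintro ⟨h1, -⟩
          exact Option.some_ne_none _ h1.symm
        | some v =>
          by_cases hv1 : v = y
          · rw [hv1, if_pos rfl,
              if_neg (show ¬(some y = some x) from
                fun h => Ne.symm hxy (Option.some.inj h)), add_zero]
            unfold gfun
            have hiff : Ccond E x y hxy f' u (some y) ↔ E u y := by
              rw [Ccond_ne E x y hxy f' hu, hc]
              constructor
              · rintro ⟨-, h2⟩
                exact h2 y rfl
              · intro hE2
                refine ⟨?_, fun vv hvv => by injection hvv with h3; rw [← h3]; exact hE2⟩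
                show some (hmap x y hxy y) = some ⟨vc, hvc⟩
                rw [hmap_ne x y hxy (Ne.symm hxy)]
                exact congrArg some (Subtype.ext hvy.symm)
            rw [if_congr hiff rfl rfl]
            rfl
          · by_cases hv2 : v = x
            · rw [hv2,
                if_neg (show ¬(some x = some y) from fun h => hxy (Option.some.inj h)),
                if_pos rfl, zero_add]
              unfold gfun
              have hiff : Ccond E x y hxy f' u (some x) ↔ E u x := by
                rw [Ccond_ne E x y hxy f' hu, hc]
                constructor
                · rintro ⟨-, h2⟩
                  exact h2 x rfl
                · intro hE2
                  refine ⟨?_, fun vv hvv => by injection hvv with h3; rw [← h3]; exact hE2⟩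
                  show some (hmap x y hxy x) = some ⟨vc, hvc⟩
                  rw [hmap_x]
                  exact congrArg some (Subtype.ext hvy.symm)
              rw [if_congr hiff rfl rfl]
              rfl
            · rw [if_neg (show ¬(some v = some y) from fun h => hv1 (Option.some.inj h)),
                if_neg (show ¬(some v = some x) from fun h => hv2 (Option.some.inj h)),
                add_zero]
              unfold gfun
              rw [if_neg]
              rw [Ccond_ne E x y hxy f' hu, hc]
              rintro ⟨h1, -⟩
              have h2 : hmap x y hxy v = ⟨vc, hvc⟩ := Option.some.inj h1
              rw [hmap_ne x y hxy hv2] at h2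
              exact hv1 ((congrArg Subtype.val h2).trans hvy)
      rw [Finset.sum_congr rfl (fun o _ => hpt o), Finset.sum_add_distrib,
        Finset.sum_ite_eq' Finset.univ (some y), Finset.sum_ite_eq' Finset.univ (some x),
        if_pos (Finset.mem_univ _), if_pos (Finset.mem_univ _)]
      show _ = (if E u vc ∧ u ≠ vc then w u vc else 0) + (if vc = y ∧ E u x then w u x else 0)
      rw [hvy]
      congr 1
      · by_cases hEuy : E u y
        · rw [if_pos hEuy, if_pos (show E u y ∧ u ≠ y from ⟨hEuy, huy⟩)]
        · rw [if_neg hEuy, if_neg (show ¬(E u y ∧ u ≠ y) from fun h => hEuy h.1)]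
      · by_cases hEux : E u x
        · rw [if_pos hEux, if_pos (show y = y ∧ E u x from ⟨rfl, hEux⟩)]
        · rw [if_neg hEux, if_neg (show ¬(y = y ∧ E u x) from fun h => hEux h.2)]
    · rw [Finset.sum_eq_single (some vc)]
      · show gfun E w q x y hxy f' u (some vc)
          = (if E u vc ∧ u ≠ vc then w u vc else 0) + (if vc = y ∧ E u x then w u x else 0)
        rw [if_neg (show ¬(vc = y ∧ E u x) from fun h => hvy h.1), add_zero]
        unfold gfun
        have hiff : Ccond E x y hxy f' u (some vc) ↔ E u vc := by
          rw [Ccond_ne E x y hxy f' hu, hc]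
          constructor
          · rintro ⟨-, h2⟩
            exact h2 vc rfl
          · intro hE2
            refine ⟨?_, fun vv hvv => by injection hvv with h3; rw [← h3]; exact hE2⟩
            show some (hmap x y hxy vc) = some ⟨vc, hvc⟩
            rw [hmap_ne x y hxy hvc]
        rw [if_congr hiff rfl rfl]
        by_cases hEuv : E u vc
        · rw [if_pos hEuv, if_pos (show E u vc ∧ u ≠ vc from ⟨hEuv, hself⟩)]
          rfl
        · rw [if_neg hEuv, if_neg (show ¬(E u vc ∧ u ≠ vc) from fun h => hEuv h.1)]
      · intro o _ ho
        unfold gfun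
        rw [if_neg]
        rw [Ccond_ne E x y hxy f' hu, hc]
        rintro ⟨h1, -⟩
        cases o with
        | none => exact Option.some_ne_none _ h1.symm
        | some v =>
          apply ho
          have h2 : hmap x y hxy v = ⟨vc, hvc⟩ := Option.some.inj h1
          by_cases hvx : v = x
          · rw [hvx, hmap_x] at h2
            exact absurd (congrArg Subtype.val h2).symm hvy
          · rw [hmap_ne x y hxy hvx] at h2
            rw [show v = vc from congrArg Subtype.val h2]
      · intro h
        exact absurd (Finset.mem_univ _) h

/-- **Deletion–contraction identity for the partition function.** For a directed edge
`e = (x,y)` of `G` and any `q > 0`: `Z_G(q) = Z_{G-e}(q) + w(e)·Z_{G/e}(q)`. -/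
theorem deletion_contraction (E : V → V → Prop) (w : V → V → ℝ)
    (hw : ∀ a b : V, 0 ≤ w a b) (x y : V) (hxy : x ≠ y) (hE : E x y)
    (q : ℝ) (hq : 0 < q) :
    Zf E w q =
      Zf (fun a b => E a b ∧ ¬(a = x ∧ b = y)) w q +
        w x y * Zf (contrE E x y) (contrW E w x y) q := by
  classical
  have Zf_eq : ∀ (E0 : V → V → Prop) (w0 : V → V → ℝ),
      Zf E0 w0 q = ∑ f ∈ Finset.univ.filter (fun f : V → Option V => IsRForest E0 f),
        q ^ nRoots f * fWeight w0 f := by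
    intro E0 w0
    unfold Zf fMeasure
    refine Finset.sum_congr ?_ (fun _ _ => rfl)
    ext f
    simp only [Finset.mem_filter, Set.mem_univ, and_true]
  have Zf_eq' : ∀ (E0 : {v : V // v ≠ x} → {v : V // v ≠ x} → Prop)
      (w0 : {v : V // v ≠ x} → {v : V // v ≠ x} → ℝ),
      Zf E0 w0 q = ∑ f ∈ Finset.univ.filter
          (fun f : {v : V // v ≠ x} → Option {v : V // v ≠ x} => IsRForest E0 f),
        q ^ nRoots f * fWeight w0 f := by
    intro E0 w0
    unfold Zf fMeasure
    refine Finset.sum_congr ?_ (fun _ _ => rfl)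
    ext f
    simp only [Finset.mem_filter, Set.mem_univ, and_true]
  rw [Zf_eq E w, Zf_eq (fun a b => E a b ∧ ¬(a = x ∧ b = y)) w,
    Zf_eq' (contrE E x y) (contrW E w x y),
    ← Finset.sum_filter_add_sum_filter_not
      (Finset.univ.filter (fun f : V → Option V => IsRForest E f))
      (fun f => f x = some y) (fun f => q ^ nRoots f * fWeight w f), add_comm]
  congr 1
  · -- deleted part
    refine Finset.sum_congr ?_ (fun _ _ => rfl)
    ext f
    simp only [Finset.mem_filter, Finset.mem_univ, true_and]
    constructor
    · rintro ⟨⟨hfor, hedge⟩, hne⟩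
      refine ⟨hfor, fun a b hab => ⟨hedge a b hab, ?_⟩⟩
      rintro ⟨ha, hb⟩
      rw [ha, hb] at hab
      exact hne hab
    · rintro ⟨hfor, hedge⟩
      refine ⟨⟨hfor, fun a b hab => (hedge a b hab).1⟩, fun hx => ?_⟩
      exact (hedge x y hx).2 ⟨rfl, rfl⟩
  · -- contracted part
    have hmaps : ∀ f ∈ (Finset.univ.filter
          (fun f : V → Option V => IsRForest E f)).filter (fun f => f x = some y),
        proj x y hxy f ∈ Finset.univ.filter
          (fun f' : {v : V // v ≠ x} → Option {v : V // v ≠ x} =>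
            IsRForest (contrE E x y) f') := by
      intro f hf
      rw [Finset.mem_filter, Finset.mem_filter] at hf
      obtain ⟨⟨-, hfor, hedge⟩, hfx⟩ := hf
      rw [Finset.mem_filter]
      refine ⟨Finset.mem_univ _, proj_forest x y hxy hfor hfx, ?_⟩
      intro u v' hpv
      unfold proj at hpv
      cases hfu : f u.1 with
      | none => rw [hfu] at hpv; exact (Option.some_ne_none _ hpv.symm).elim
      | some ww =>
        rw [hfu] at hpv
        have h2 : hmap x y hxy ww = v' := Option.some.inj hpv
        by_cases hww : ww = x
        · rw [hww, hmap_x] at h2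
          have hy : v'.1 = y := (congrArg Subtype.val h2).symm
          have hex : E u.1 x := by
            have h3 := hedge u.1 ww hfu
            rw [hww] at h3
            exact h3
          refine ⟨?_, Or.inr ⟨hex, hy⟩⟩
          intro hueq
          have huy : u.1 = y := by rw [hueq, hy]
          rw [hww] at hfu
          refine no_two hfor ?_ hfu
          rw [huy]
          exact hfx
        · rw [hmap_ne x y hxy hww] at h2
          have hww' : ww = v'.1 := congrArg Subtype.val h2
          refine ⟨?_, Or.inl (by rw [← hww']; exact hedge u.1 ww hfu)⟩
          intro hueq
          apply no_self hfor u.1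
          rw [hfu, hww', hueq]
    rw [← Finset.sum_fiberwise_of_maps_to hmaps (fun f => q ^ nRoots f * fWeight w f)]
    have hfiber : ∀ f' ∈ Finset.univ.filter
        (fun f' : {v : V // v ≠ x} → Option {v : V // v ≠ x} =>
          IsRForest (contrE E x y) f'),
        (∑ f ∈ ((Finset.univ.filter
            (fun f : V → Option V => IsRForest E f)).filter
            (fun f => f x = some y)).filter (fun f => proj x y hxy f = f'),
          q ^ nRoots f * fWeight w f)
        = w x y * (q ^ nRoots f' * fWeight (contrW E w x y) f') := by
      intro f' hf'
      have hfor' : IsForest f' := ((Finset.mem_filter.mp hf').2).1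
      have hset : ((Finset.univ.filter
            (fun f : V → Option V => IsRForest E f)).filter
            (fun f => f x = some y)).filter (fun f => proj x y hxy f = f')
          = Finset.univ.filter
            (fun f : V → Option V => ∀ u : V, Ccond E x y hxy f' u (f u)) := by
        ext f
        simp only [Finset.mem_filter, Finset.mem_univ, true_and, and_assoc]
        rw [← and_assoc]
        exact fiber_mem E x y hxy hE hfor' f
      rw [hset]
      calc
        (∑ f ∈ Finset.univ.filter
            (fun f : V → Option V => ∀ u : V, Ccond E x y hxy f' u (f u)),
          q ^ nRoots f * fWeight w f)
            = ∑ f ∈ Finset.univ.filter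
                (fun f : V → Option V => ∀ u : V, Ccond E x y hxy f' u (f u)),
              ∏ u : V, (f u).elim q (fun v => w u v) :=
              Finset.sum_congr rfl (fun f _ => (prod_elim_eq w q f).symm)
        _ = ∑ f : V → Option V, ∏ u : V, gfun E w q x y hxy f' u (f u) := by
              rw [Finset.sum_filter]
              exact Finset.sum_congr rfl fun f _ => (prod_gfun E w q x y hxy f' f).symm
        _ = ∏ u : V, ∑ o : Option V, gfun E w q x y hxy f' u o := by
              rw [Finset.prod_univ_sum (fun _ : V => (Finset.univ : Finset (Option V)))
                (fun u o => gfun E w q x y hxy f' u o), Fintype.piFinset_univ]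
        _ = (∑ o : Option V, gfun E w q x y hxy f' x o)
              * ∏ u ∈ Finset.univ.erase x, ∑ o : Option V, gfun E w q x y hxy f' u o :=
              (Finset.mul_prod_erase Finset.univ _ (Finset.mem_univ x)).symm
        _ = w x y * (q ^ nRoots f' * fWeight (contrW E w x y) f') := by
              rw [sum_gfun_x E w q x y hxy f']
              congr 1
              rw [Finset.prod_subtype (p := fun v : V => v ≠ x) (Finset.univ.erase x)
                (fun v => by simp [Finset.mem_erase])
                (fun u : V => ∑ o : Option V, gfun E w q x y hxy f' u o),
                ← prod_elim_eq (contrW E w x y) q f']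
              exact Finset.prod_congr rfl fun u _ => sum_gfun_ne E w q x y hxy hfor' u.2
    rw [Finset.sum_congr rfl hfiber, ← Finset.mul_sum]

end
end

section
/- Let G=(V,E,w) be a finite weighted directed graph and x∈V a vertex. Let Φ_q be the random spanning rooted forest of G with parameter q>0 and let R_q denote its set of roots. Then the rooting probability q ↦ P(x ∈ R_q) is differentiable and satisfies 0 ≤ d/dq P(x ∈ R_q) ≤ (1/q)·P(x ∈ R_q); in particular, q ↦ P(x ∈ R_q) is non-decreasing. -/
open Classical Finset Filter
set_option linter.unusedSectionVars false
set_option maxHeartbeats 1000000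

noncomputable section

variable {V : Type*} [Fintype V] [DecidableEq V]

/-- The rooting probability `P(x ∈ R_q)`: the probability that `x` is a root of the random
spanning rooted forest `Φ_q`. -/
def rootProb (E : V → V → Prop) (w : V → V → ℝ) (q : ℝ) (x : V) : ℝ :=
  fProb E w q {f | f x = none}

namespace RFAux

variable {V : Type*} [Fintype V] [DecidableEq V]

def ittr (f : V → Option V) (n : ℕ) (x : V) : Option V := (fstep f)^[n] (some x)

def hits (f : V → Option V) (y x : V) : Prop := ∃ n, ittr f n y = some x

def rt (f : V → Option V) (x z : V) : Prop := hits f x z ∧ f z = none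

lemma ittr_zero (f : V → Option V) (x : V) : ittr f 0 x = some x := rfl

lemma fstep_none (f : V → Option V) : fstep f none = none := rfl

lemma fstep_some (f : V → Option V) (x : V) : fstep f (some x) = f x := rfl

lemma ittr_succ (f : V → Option V) (n : ℕ) (x : V) :
    ittr f (n+1) x = fstep f (ittr f n x) := Function.iterate_succ_apply' _ _ _

lemma ittr_shift {f : V → Option V} {x y : V} (h : f x = some y) (n : ℕ) :
    ittr f (n+1) x = ittr f n y := by
  unfold ittr
  rw [Function.iterate_succ_apply]
  simp [fstep, h]

lemma ittr_none_add {f : V → Option V} {x : V} {n : ℕ} (h : ittr f n x = none) (m : ℕ) :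
    ittr f (m + n) x = none := by
  unfold ittr at *
  rw [Function.iterate_add_apply, h]
  exact Function.iterate_fixed rfl m

lemma ittr_none_le {f : V → Option V} {x : V} {n m : ℕ} (h : ittr f n x = none) (hnm : n ≤ m) :
    ittr f m x = none := by
  obtain ⟨k, rfl⟩ := Nat.exists_eq_add_of_le hnm
  rw [add_comm]
  exact ittr_none_add h k

lemma ittr_add_some {f : V → Option V} {x y : V} {n : ℕ} (h : ittr f n x = some y) (m : ℕ) :
    ittr f (m + n) x = ittr f m y := by
  unfold ittr at *
  rw [Function.iterate_add_apply, h]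

lemma ittr_congr {f g : V → Option V} {x : V} (hfg : ∀ v, v ≠ x → f v = g v)
    {y : V} : ∀ {n : ℕ}, (∀ k, k < n → ittr f k y ≠ some x) → ittr g n y = ittr f n y := by
  intro n
  induction n with
  | zero => intro _; rfl
  | succ n ih =>
    intro hk
    have e : ittr g n y = ittr f n y := ih (fun k hkn => hk k (Nat.lt_succ_of_lt hkn))
    rw [ittr_succ, ittr_succ, e]
    cases ho : ittr f n y with
    | none => rfl
    | some u =>
      have hux : u ≠ x := by
        intro h
        exact hk n (Nat.lt_succ_self n) (by rw [ho, h])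
      simp [fstep, hfg u hux]

lemma hits_congr {f g : V → Option V} {x : V} (hfg : ∀ v, v ≠ x → f v = g v) {y : V}
    (h : hits f y x) : hits g y x := by
  have hex : ∃ n, ittr f n y = some x := h
  refine ⟨Nat.find hex, ?_⟩
  rw [ittr_congr hfg (fun k hk => Nat.find_min hex hk)]
  exact Nat.find_spec hex

lemma hits_congr_iff {f g : V → Option V} {x : V} (hfg : ∀ v, v ≠ x → f v = g v) (y : V) :
    hits f y x ↔ hits g y x :=
  ⟨hits_congr hfg, hits_congr (fun v hv => (hfg v hv).symm)⟩

lemma ittr_eq_of_not_hits {f g : V → Option V} {x : V} (hfg : ∀ v, v ≠ x → f v = g v) {y : V}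
    (h : ¬ hits f y x) (n : ℕ) : ittr g n y = ittr f n y :=
  ittr_congr hfg (fun k _ hk => h ⟨k, hk⟩)

lemma forest_no_cycle {f : V → Option V} (hf : IsForest f) (x : V) (n : ℕ) :
    ittr f (n+1) x ≠ some x := by
  intro h
  have key : ∀ k, ittr f (k * (n+1)) x = some x := by
    intro k
    induction k with
    | zero => simpa using ittr_zero f x
    | succ k ih =>
      have e : (k+1) * (n+1) = (n+1) + k * (n+1) := by ring
      rw [e, ittr_add_some ih, h]
  obtain ⟨m, hm⟩ := hf x
  have hm' : ittr f m x = none := hm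
  have h1 : ittr f ((m+1) * (n+1)) x = none :=
    ittr_none_le hm' (le_trans (Nat.le_succ m) (Nat.le_mul_of_pos_right _ (Nat.succ_pos n)))
  rw [key (m+1)] at h1
  exact Option.some_ne_none _ h1

lemma forest_no_selfloop {f : V → Option V} (hf : IsForest f) (x : V) : f x ≠ some x := by
  intro h
  apply forest_no_cycle hf x 0
  show ittr f 1 x = some x
  rw [ittr_succ, ittr_zero, fstep_some, h]

lemma not_hits_parent {f : V → Option V} (hf : IsForest f) {x y : V} (h : f x = some y) :
    ¬ hits f y x := by
  rintro ⟨n, hn⟩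
  apply forest_no_cycle hf x n
  rw [ittr_shift h, hn]

lemma forest_update_none {f : V → Option V} (hf : IsForest f) (x : V) :
    IsForest (Function.update f x none) := by
  intro v
  set g := Function.update f x none with hg
  have hfg : ∀ u, u ≠ x → f u = g u := fun u hu => (Function.update_of_ne hu _ _).symm
  by_cases hv : hits f v x
  · have hex : ∃ n, ittr f n v = some x := hv
    refine ⟨Nat.find hex + 1, ?_⟩
    show ittr g (Nat.find hex + 1) v = none
    rw [ittr_succ, ittr_congr hfg (fun k hk => Nat.find_min hex hk), Nat.find_spec hex,
      fstep_some, hg, Function.update_self]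
  · obtain ⟨n, hn⟩ := hf v
    exact ⟨n, by rw [show (fstep g)^[n] (some v) = ittr g n v from rfl,
      ittr_eq_of_not_hits hfg hv]; exact hn⟩

lemma forest_update_some {f : V → Option V} (hf : IsForest f) {x y : V} (hy : ¬ hits f y x) :
    IsForest (Function.update f x (some y)) := by
  intro v
  set g := Function.update f x (some y) with hg
  have hfg : ∀ u, u ≠ x → f u = g u := fun u hu => (Function.update_of_ne hu _ _).symm
  obtain ⟨ℓ, hℓ⟩ := hf y
  have hℓ' : ittr f ℓ y = none := hℓ
  have hgy : ittr g ℓ y = none := by rw [ittr_eq_of_not_hits hfg hy]; exact hℓ'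
  by_cases hv : hits f v x
  · have hex : ∃ n, ittr f n v = some x := hv
    have hgx : ittr g (Nat.find hex) v = some x := by
      rw [ittr_congr hfg (fun k hk => Nat.find_min hex hk)]
      exact Nat.find_spec hex
    have h1 : ittr g (Nat.find hex + 1) v = some y := by
      rw [ittr_succ, hgx, fstep_some, hg, Function.update_self]
    refine ⟨ℓ + (Nat.find hex + 1), ?_⟩
    show ittr g (ℓ + (Nat.find hex + 1)) v = none
    rw [ittr_add_some h1, hgy]
  · obtain ⟨n, hn⟩ := hf v
    exact ⟨n, by rw [show (fstep g)^[n] (some v) = ittr g n v from rfl,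
      ittr_eq_of_not_hits hfg hv]; exact hn⟩

lemma rt_step_none {f : V → Option V} {x z : V} {n : ℕ} (h : ittr f n x = some z)
    (hz : f z = none) : ittr f (n+1) x = none := by
  rw [ittr_succ, h, fstep_some, hz]

lemma rt_self_iff {f : V → Option V} {x : V} : rt f x x ↔ f x = none :=
  ⟨fun h => h.2, fun h => ⟨⟨0, rfl⟩, h⟩⟩

lemma rt_unique {f : V → Option V} {x z₁ z₂ : V} (h₁ : rt f x z₁) (h₂ : rt f x z₂) :
    z₁ = z₂ := by
  obtain ⟨⟨n₁, hn₁⟩, hz₁⟩ := h₁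
  obtain ⟨⟨n₂, hn₂⟩, hz₂⟩ := h₂
  have e : n₁ = n₂ := by
    by_contra hne
    rcases Nat.lt_or_ge n₁ n₂ with h | h
    · have := ittr_none_le (rt_step_none hn₁ hz₁) h
      rw [hn₂] at this; exact Option.some_ne_none _ this
    · have h' : n₂ < n₁ := lt_of_le_of_ne h (Ne.symm hne)
      have := ittr_none_le (rt_step_none hn₂ hz₂) h'
      rw [hn₁] at this; exact Option.some_ne_none _ this
  rw [e, hn₂] at hn₁
  exact (Option.some.inj hn₁).symm

lemma rt_mono_fwd {f : V → Option V} {a b z : V} (hab : hits f a b) (h : rt f b z) :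
    rt f a z := by
  obtain ⟨n, hn⟩ := hab
  obtain ⟨⟨m, hm⟩, hz⟩ := h
  exact ⟨⟨m + n, by rw [ittr_add_some hn, hm]⟩, hz⟩

lemma rt_mono_bwd {f : V → Option V} {a b z : V} (hab : hits f a b) (h : rt f a z) :
    rt f b z := by
  obtain ⟨n, hn⟩ := hab
  obtain ⟨⟨m, hm⟩, hz⟩ := h
  rcases Nat.lt_or_ge m n with hlt | hge
  · exfalso
    have := ittr_none_le (rt_step_none hm hz) hlt
    rw [hn] at this; exact Option.some_ne_none _ this
  · obtain ⟨k, rfl⟩ := Nat.exists_eq_add_of_le hge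
    have h2 := ittr_add_some hn k
    rw [add_comm] at h2
    rw [h2] at hm
    exact ⟨⟨k, hm⟩, hz⟩

lemma rt_congr {f g : V → Option V} {x y z : V} (hfg : ∀ v, v ≠ x → f v = g v)
    (hy : ¬ hits f y x) (hz : z ≠ x) (h : rt f y z) : rt g y z := by
  obtain ⟨⟨n, hn⟩, hzn⟩ := h
  exact ⟨⟨n, by rw [ittr_eq_of_not_hits hfg hy]; exact hn⟩, (hfg z hz) ▸ hzn⟩

lemma rt_exists {f : V → Option V} (hf : IsForest f) (x : V) : ∃ z, rt f x z := by
  have hex : ∃ n, ittr f n x = none := hf x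
  have hspec : ittr f (Nat.find hex) x = none := Nat.find_spec hex
  have hn0 : Nat.find hex ≠ 0 := by
    intro h; rw [h] at hspec; exact Option.some_ne_none _ hspec
  obtain ⟨m, hme⟩ := Nat.exists_eq_succ_of_ne_zero hn0
  cases hm : ittr f m x with
  | none => exact absurd hm (Nat.find_min hex (by omega))
  | some z =>
    refine ⟨z, ⟨m, hm⟩, ?_⟩
    rw [hme, ittr_succ, hm, fstep_some] at hspec
    exact hspec

lemma fx_some_of_rt_ne {f : V → Option V} {x z : V} (h : rt f x z) (hzx : z ≠ x) :
    ∃ y, f x = some y := by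
  cases hfx : f x with
  | none => exact absurd (rt_unique h (rt_self_iff.2 hfx)) hzx
  | some y => exact ⟨y, rfl⟩


section Measures

variable (E : V → V → Prop) (w : V → V → ℝ)

def wmx (x y : V) : ℝ := if x ≠ y ∧ E x y then w x y else 0

def allF : Finset (V → Option V) := univ.filter IsForest

def mu (q : ℝ) (f : V → Option V) : ℝ := q ^ nRoots f * fWeight (wmx E w) f

def muD (q : ℝ) (f : V → Option V) : ℝ :=
  (nRoots f : ℝ) * q ^ (nRoots f - 1) * fWeight (wmx E w) f

def Bs (q : ℝ) (x z : V) : ℝ := ∑ f ∈ allF.filter (fun f => rt f x z), mu E w q f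

def Bs' (q : ℝ) (x z : V) : ℝ := ∑ f ∈ allF.filter (fun f => rt f x z), muD E w q f

def Zs (q : ℝ) : ℝ := ∑ f ∈ allF, mu E w q f

def Zs' (q : ℝ) : ℝ := ∑ f ∈ allF, muD E w q f

def Dd (x : V) : ℝ := ∑ y, wmx E w x y

def Mm (q : ℝ) (x y : V) : ℝ := (if x = y then q + Dd E w x else 0) - wmx E w x y

lemma mem_allF {f : V → Option V} : f ∈ (allF : Finset (V → Option V)) ↔ IsForest f := by
  simp [allF]

lemma mem_filter_allF {f : V → Option V} {P : (V → Option V) → Prop} [DecidablePred P] :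
    f ∈ (allF : Finset (V → Option V)).filter P ↔ IsForest f ∧ P f := by
  simp [Finset.mem_filter, mem_allF]

lemma mem_pairF {p : V × (V → Option V)} {P : V × (V → Option V) → Prop} [DecidablePred P] :
    p ∈ ((univ ×ˢ allF : Finset (V × (V → Option V))).filter P)
      ↔ IsForest p.2 ∧ P p := by
  simp [Finset.mem_filter, Finset.mem_product, mem_allF]

variable {E w}

lemma wmx_nonneg (hw : ∀ a b, 0 ≤ w a b) (x y : V) : 0 ≤ wmx E w x y := by
  unfold wmx; split_ifs
  · exact hw x y
  · norm_num

lemma fWeight_wmx_nonneg (hw : ∀ a b, 0 ≤ w a b) (f : V → Option V) :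
    0 ≤ fWeight (wmx E w) f := by
  apply Finset.prod_nonneg
  intro v _
  cases hv : f v with
  | none => norm_num
  | some u => simpa using wmx_nonneg hw v u

lemma mu_nonneg (hw : ∀ a b, 0 ≤ w a b) {q : ℝ} (hq : 0 ≤ q) (f : V → Option V) :
    0 ≤ mu E w q f :=
  mul_nonneg (pow_nonneg hq _) (fWeight_wmx_nonneg hw f)

lemma nRoots_update_none {f : V → Option V} {x : V} (h : f x ≠ none) :
    nRoots (Function.update f x none) = nRoots f + 1 := by
  unfold nRoots
  have e : (univ.filter fun v => Function.update f x none v = none)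
      = insert x (univ.filter fun v => f v = none) := by
    ext v
    by_cases hv : v = x
    · subst hv; simp [Function.update_self]
    · simp [Function.update_of_ne hv, hv]
  rw [e, Finset.card_insert_of_notMem (by simp [h])]

lemma nRoots_update_some {f : V → Option V} {x y : V} (h : f x ≠ none) :
    nRoots (Function.update f x (some y)) = nRoots f := by
  unfold nRoots
  congr 1
  ext v
  by_cases hv : v = x
  · subst hv; simp [Function.update_self, h]
  · simp [Function.update_of_ne hv]

lemma fWeight_update (wfun : V → V → ℝ) (f : V → Option V) (x : V) (o : Option V) :
    fWeight wfun (Function.update f x o) * ((f x).elim 1 (fun y => wfun x y))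
      = fWeight wfun f * (o.elim 1 (fun y => wfun x y)) := by
  unfold fWeight
  rw [← Finset.mul_prod_erase univ (fun v => (Function.update f x o v).elim 1 (fun y => wfun v y))
      (Finset.mem_univ x),
    ← Finset.mul_prod_erase univ (fun v => (f v).elim 1 (fun y => wfun v y)) (Finset.mem_univ x)]
  rw [Finset.prod_congr rfl
    (fun v hv => by rw [Function.update_of_ne (Finset.ne_of_mem_erase hv)])]
  simp only [Function.update_self]
  ring

lemma mu_detach {q : ℝ} {g : V → Option V} {x y : V} (hgx : g x = some y) :
    q * mu E w q g = wmx E w x y * mu E w q (Function.update g x none) := by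
  unfold mu
  have h1 : nRoots (Function.update g x none) = nRoots g + 1 :=
    nRoots_update_none (by rw [hgx]; simp)
  have h2 := fWeight_update (wmx E w) g x none
  rw [hgx] at h2
  simp only [Option.elim_some, Option.elim_none, mul_one] at h2
  rw [h1, pow_succ, ← h2]
  ring

lemma mu_swap {q : ℝ} {f : V → Option V} {x y₀ : V} (hfx : f x = some y₀) (y : V) :
    wmx E w x y * mu E w q f = wmx E w x y₀ * mu E w q (Function.update f x (some y)) := by
  unfold mu
  have h1 : nRoots (Function.update f x (some y)) = nRoots f :=
    nRoots_update_some (by rw [hfx]; simp)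
  have h2 := fWeight_update (wmx E w) f x (some y)
  rw [hfx] at h2
  simp only [Option.elim_some] at h2
  rw [h1]
  linear_combination (-(q ^ nRoots f)) * h2

end Measures

section Bijections

variable {E : V → V → Prop} {w : V → V → ℝ}

lemma agree_update (f : V → Option V) (x : V) (o : Option V) :
    ∀ v, v ≠ x → f v = Function.update f x o v :=
  fun v hv => (Function.update_of_ne hv _ _).symm

lemma agree_update' (f : V → Option V) (x : V) (o : Option V) :
    ∀ v, v ≠ x → Function.update f x o v = f v :=
  fun v hv => Function.update_of_ne hv _ _

lemma hits_parent_step {f : V → Option V} {x y : V} (h : f x = some y) : hits f x y :=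
  ⟨1, by rw [ittr_shift h 0, ittr_zero]⟩

lemma pair_sum {P : V → (V → Option V) → Prop} {F : V → (V → Option V) → ℝ}
    [DecidablePred (fun p : V × (V → Option V) => P p.1 p.2)] [∀ y, DecidablePred (P y)] :
    ∑ p ∈ ((univ ×ˢ allF : Finset (V × (V → Option V))).filter (fun p => P p.1 p.2)), F p.1 p.2
      = ∑ y, ∑ f ∈ (allF : Finset (V → Option V)).filter (fun f => P y f), F y f := by
  rw [Finset.sum_filter, Finset.sum_product]
  refine Finset.sum_congr rfl (fun y _ => ?_)
  rw [Finset.sum_filter]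

lemma S1z (E : V → V → Prop) (w : V → V → ℝ) (q : ℝ) {x z : V} (hzx : z ≠ x) :
    ∑ g ∈ (allF : Finset (V → Option V)).filter (fun g => rt g x z), q * mu E w q g
      = ∑ p ∈ ((univ ×ˢ allF : Finset (V × (V → Option V))).filter
          (fun p => rt p.2 p.1 z ∧ p.2 x = none)),
          wmx E w x p.1 * mu E w q p.2 := by
  apply Finset.sum_nbij' (i := fun g => (((g x).getD x), Function.update g x none))
    (j := fun p => Function.update p.2 x (some p.1))
  · rintro g hg
    obtain ⟨hgF, hrt⟩ := mem_filter_allF.1 hg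
    obtain ⟨y₀, hgx⟩ := fx_some_of_rt_ne hrt hzx
    have hyd : (g x).getD x = y₀ := by rw [hgx]; rfl
    have hnohit : ¬ hits g y₀ x := not_hits_parent hgF hgx
    have hrty : rt g y₀ z := rt_mono_bwd (hits_parent_step hgx) hrt
    apply mem_pairF.2
    dsimp only
    refine ⟨forest_update_none hgF x, ?_, Function.update_self x none g⟩
    rw [hyd]
    exact rt_congr (agree_update g x none) hnohit hzx hrty
  · rintro p hp
    obtain ⟨hpF, hprt, hpx⟩ := mem_pairF.1 hp
    have hnohit : ¬ hits p.2 p.1 x := fun h => hzx (rt_unique hprt ⟨h, hpx⟩)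
    apply mem_filter_allF.2
    refine ⟨forest_update_some hpF hnohit, ?_⟩
    have h1 : rt (Function.update p.2 x (some p.1)) p.1 z :=
      rt_congr (agree_update p.2 x (some p.1)) hnohit hzx hprt
    exact rt_mono_fwd (hits_parent_step (Function.update_self x (some p.1) p.2)) h1
  · rintro g hg
    obtain ⟨hgF, hrt⟩ := mem_filter_allF.1 hg
    obtain ⟨y₀, hgx⟩ := fx_some_of_rt_ne hrt hzx
    simp only [hgx, Option.getD_some, Function.update_idem]
    rw [← hgx]
    exact Function.update_eq_self x g
  · rintro p hp
    obtain ⟨hpF, hprt, hpx⟩ := mem_pairF.1 hp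
    refine Prod.ext ?_ ?_
    · simp [Function.update_self]
    · simp only [Function.update_idem]
      rw [← hpx]
      exact Function.update_eq_self x p.2
  · rintro g hg
    obtain ⟨hgF, hrt⟩ := mem_filter_allF.1 hg
    obtain ⟨y₀, hgx⟩ := fx_some_of_rt_ne hrt hzx
    simp only [hgx, Option.getD_some]
    exact mu_detach hgx

lemma S1x (E : V → V → Prop) (w : V → V → ℝ) (q : ℝ) (x : V) :
    ∑ g ∈ (allF : Finset (V → Option V)).filter (fun g => ¬ (g x = none)), q * mu E w q g
      = ∑ p ∈ ((univ ×ˢ allF : Finset (V × (V → Option V))).filter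
          (fun p => p.2 x = none ∧ ¬ rt p.2 p.1 x)),
          wmx E w x p.1 * mu E w q p.2 := by
  apply Finset.sum_nbij' (i := fun g => (((g x).getD x), Function.update g x none))
    (j := fun p => Function.update p.2 x (some p.1))
  · rintro g hg
    obtain ⟨hgF, hgx0⟩ := mem_filter_allF.1 hg
    obtain ⟨y₀, hgx⟩ := Option.ne_none_iff_exists'.1 hgx0
    have hyd : (g x).getD x = y₀ := by rw [hgx]; rfl
    have hnohit : ¬ hits g y₀ x := not_hits_parent hgF hgx
    apply mem_pairF.2
    dsimp only
    refine ⟨forest_update_none hgF x, Function.update_self x none g, ?_⟩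
    rw [hyd]
    intro hrt
    exact hnohit (hits_congr (agree_update' g x none) hrt.1)
  · rintro p hp
    obtain ⟨hpF, hpx, hnrt⟩ := mem_pairF.1 hp
    have hnohit : ¬ hits p.2 p.1 x := fun h => hnrt ⟨h, hpx⟩
    apply mem_filter_allF.2
    refine ⟨forest_update_some hpF hnohit, ?_⟩
    rw [Function.update_self]
    simp
  · rintro g hg
    obtain ⟨hgF, hgx0⟩ := mem_filter_allF.1 hg
    obtain ⟨y₀, hgx⟩ := Option.ne_none_iff_exists'.1 hgx0
    simp only [hgx, Option.getD_some, Function.update_idem]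
    rw [← hgx]
    exact Function.update_eq_self x g
  · rintro p hp
    obtain ⟨hpF, hpx, hnrt⟩ := mem_pairF.1 hp
    refine Prod.ext ?_ ?_
    · simp [Function.update_self]
    · simp only [Function.update_idem]
      rw [← hpx]
      exact Function.update_eq_self x p.2
  · rintro g hg
    obtain ⟨hgF, hgx0⟩ := mem_filter_allF.1 hg
    obtain ⟨y₀, hgx⟩ := Option.ne_none_iff_exists'.1 hgx0
    simp only [hgx, Option.getD_some]
    exact mu_detach hgx

lemma S2 (E : V → V → Prop) (w : V → V → ℝ) (q : ℝ) {x z : V} (hzx : z ≠ x) :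
    ∑ p ∈ ((univ ×ˢ allF : Finset (V × (V → Option V))).filter
        (fun p => rt p.2 x z ∧ ¬ hits p.2 p.1 x)), wmx E w x p.1 * mu E w q p.2
      = ∑ p ∈ ((univ ×ˢ allF : Finset (V × (V → Option V))).filter
          (fun p => (rt p.2 p.1 z ∧ ¬ (p.2 x = none)) ∧ ¬ hits p.2 p.1 x)),
          wmx E w x p.1 * mu E w q p.2 := by
  apply Finset.sum_nbij'
    (i := fun p => (((p.2 x).getD x), Function.update p.2 x (some p.1)))
    (j := fun p => (((p.2 x).getD x), Function.update p.2 x (some p.1)))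
  · rintro p hp
    obtain ⟨hpF, hrt, hnh⟩ := mem_pairF.1 hp
    obtain ⟨y₀, hfx⟩ := fx_some_of_rt_ne hrt hzx
    have hyd : (p.2 x).getD x = y₀ := by rw [hfx]; rfl
    have hnohit₀ : ¬ hits p.2 y₀ x := not_hits_parent hpF hfx
    have hrty : rt p.2 y₀ z := rt_mono_bwd (hits_parent_step hfx) hrt
    apply mem_pairF.2
    dsimp only
    refine ⟨forest_update_some hpF hnh, ⟨?_, ?_⟩, ?_⟩
    · rw [hyd]
      exact rt_congr (agree_update p.2 x (some p.1)) hnohit₀ hzx hrty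
    · simp [Function.update_self]
    · rw [hyd]
      intro hh
      exact hnohit₀ (hits_congr (agree_update' p.2 x (some p.1)) hh)
  · rintro p hp
    obtain ⟨hpF, ⟨hrt, hx0⟩, hnh⟩ := mem_pairF.1 hp
    obtain ⟨y₀, hfx⟩ := Option.ne_none_iff_exists'.1 hx0
    have hyd : (p.2 x).getD x = y₀ := by rw [hfx]; rfl
    have hnohit₀ : ¬ hits p.2 y₀ x := not_hits_parent hpF hfx
    apply mem_pairF.2
    dsimp only
    refine ⟨forest_update_some hpF hnh, ?_, ?_⟩
    · have h1 : rt (Function.update p.2 x (some p.1)) p.1 z :=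
        rt_congr (agree_update p.2 x (some p.1)) hnh hzx hrt
      exact rt_mono_fwd (hits_parent_step (Function.update_self x (some p.1) p.2)) h1
    · rw [hyd]
      intro hh
      exact hnohit₀ (hits_congr (agree_update' p.2 x (some p.1)) hh)
  · rintro p hp
    obtain ⟨hpF, hrt, hnh⟩ := mem_pairF.1 hp
    obtain ⟨y₀, hfx⟩ := fx_some_of_rt_ne hrt hzx
    simp only [hfx, Option.getD_some, Function.update_self, Function.update_idem]
    rw [← hfx]
    exact Prod.ext rfl (Function.update_eq_self x p.2)
  · rintro p hp
    obtain ⟨hpF, ⟨hrt, hx0⟩, hnh⟩ := mem_pairF.1 hp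
    obtain ⟨y₀, hfx⟩ := Option.ne_none_iff_exists'.1 hx0
    simp only [hfx, Option.getD_some, Function.update_self, Function.update_idem]
    rw [← hfx]
    exact Prod.ext rfl (Function.update_eq_self x p.2)
  · rintro p hp
    obtain ⟨hpF, hrt, hnh⟩ := mem_pairF.1 hp
    obtain ⟨y₀, hfx⟩ := fx_some_of_rt_ne hrt hzx
    simp only [hfx, Option.getD_some]
    exact mu_swap hfx p.1

lemma S3 {x z : V} (hzx : z ≠ x) (y : V) :
    (allF : Finset (V → Option V)).filter (fun f => rt f x z ∧ hits f y x)
      = (allF : Finset (V → Option V)).filter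
          (fun f => (rt f y z ∧ ¬ (f x = none)) ∧ hits f y x) := by
  apply Finset.filter_congr
  intro f _
  constructor
  · rintro ⟨hrt, hh⟩
    refine ⟨⟨rt_mono_fwd hh hrt, ?_⟩, hh⟩
    intro h0
    exact hzx (rt_unique hrt (rt_self_iff.2 h0))
  · rintro ⟨⟨hrty, -⟩, hh⟩
    exact ⟨rt_mono_bwd hh hrty, hh⟩

end Bijections

section Bridge

variable {E : V → V → Prop} {w : V → V → ℝ}

lemma fMeasure_eq (E : V → V → Prop) (w : V → V → ℝ) (q : ℝ) (H : Set (V → Option V)) :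
    fMeasure E w q H = ∑ f ∈ (allF : Finset (V → Option V)).filter (fun f => f ∈ H),
      mu E w q f := by
  unfold fMeasure
  rw [show ((allF : Finset (V → Option V)).filter (fun f => f ∈ H))
      = univ.filter (fun f : V → Option V => IsForest f ∧ f ∈ H) by
    rw [allF, Finset.filter_filter]]
  apply Finset.sum_subset_zero_on_sdiff
  · intro f hf
    rw [Finset.mem_filter] at hf ⊢
    exact ⟨hf.1, hf.2.1.1, hf.2.2⟩
  · intro f hf
    rw [Finset.mem_sdiff, Finset.mem_filter, Finset.mem_filter] at hf
    obtain ⟨⟨-, hF, hH⟩, hn⟩ := hf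
    have hnR : ¬ IsRForest E f := fun h => hn ⟨Finset.mem_univ f, h, hH⟩
    have : ∃ a b, f a = some b ∧ ¬ E a b := by
      by_contra hc
      push_neg at hc
      exact hnR ⟨hF, fun a b hab => hc a b hab⟩
    obtain ⟨a, b, hab, hE⟩ := this
    unfold mu
    have : fWeight (wmx E w) f = 0 := by
      apply Finset.prod_eq_zero (Finset.mem_univ a)
      rw [hab]
      simp [wmx, hE]
    rw [this, mul_zero]
  · intro f hf
    rw [Finset.mem_filter] at hf
    obtain ⟨-, hRF, -⟩ := hf
    unfold mu
    congr 1
    apply Finset.prod_congr rfl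
    intro v _
    cases hv : f v with
    | none => rfl
    | some u =>
      have hvu : v ≠ u := fun h => forest_no_selfloop hRF.1 v (by rw [hv, h])
      simp [wmx, hvu, hRF.2 v u hv]

lemma Zf_eq (E : V → V → Prop) (w : V → V → ℝ) (q : ℝ) : Zf E w q = Zs E w q := by
  rw [Zf, fMeasure_eq, Zs]
  congr 1
  simp [Finset.filter_true_of_mem]

lemma Bs_eq_fMeasure (E : V → V → Prop) (w : V → V → ℝ) (q : ℝ) (x z : V) :
    Bs E w q x z = fMeasure E w q {f | rt f x z} := by
  rw [fMeasure_eq, Bs]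
  refine Finset.sum_congr ?_ (fun _ _ => rfl)
  ext f
  simp [Finset.mem_filter, Set.mem_setOf_eq]

lemma rootProb_eq (E : V → V → Prop) (w : V → V → ℝ) (q : ℝ) (x : V) :
    rootProb E w q x = Bs E w q x x / Zs E w q := by
  unfold rootProb fProb
  rw [Zf_eq, fMeasure_eq, Bs]
  congr 2
  ext f
  simp [Finset.mem_filter, Set.mem_setOf_eq, rt_self_iff]

def rootF (f : V → Option V) (x : V) : V := if h : ∃ z, rt f x z then h.choose else x

lemma rootF_spec {f : V → Option V} (hf : IsForest f) (x : V) : rt f x (rootF f x) := by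
  rw [rootF, dif_pos (rt_exists hf x)]
  exact (rt_exists hf x).choose_spec

lemma Bs_row_sum (E : V → V → Prop) (w : V → V → ℝ) (q : ℝ) (x : V) :
    ∑ z, Bs E w q x z = Zs E w q := by
  unfold Bs Zs
  rw [← Finset.sum_fiberwise allF (fun f => rootF f x) (mu E w q)]
  apply Finset.sum_congr rfl
  intro z _
  congr 1
  apply Finset.filter_congr
  intro f hf
  have hfF : IsForest f := mem_allF.1 hf
  constructor
  · intro h
    exact rt_unique (rootF_spec hfF x) h
  · intro h
    exact h ▸ rootF_spec hfF x

lemma Bs_nonneg (hw : ∀ a b, 0 ≤ w a b) {q : ℝ} (hq : 0 ≤ q) (x z : V) :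
    0 ≤ Bs E w q x z :=
  Finset.sum_nonneg (fun f _ => mu_nonneg hw hq f)

lemma Bs_le_diag (hw : ∀ a b, 0 ≤ w a b) {q : ℝ} (hq : 0 ≤ q) (x y : V) :
    Bs E w q y x ≤ Bs E w q x x := by
  apply Finset.sum_le_sum_of_subset_of_nonneg
  · intro f hf
    rw [Finset.mem_filter] at hf ⊢
    exact ⟨hf.1, rt_self_iff.2 hf.2.2⟩
  · intro f _ _
    exact mu_nonneg hw hq f

lemma Zs_pos (hw : ∀ a b, 0 ≤ w a b) {q : ℝ} (hq : 0 < q) [Nonempty V] :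
    0 < Zs E w q := by
  have hmem : (fun _ => none : V → Option V) ∈ (allF : Finset (V → Option V)) := by
    rw [mem_allF]
    intro v
    exact ⟨1, rfl⟩
  have hmu : mu E w q (fun _ => none) = q ^ Fintype.card V := by
    unfold mu fWeight nRoots
    simp [Finset.card_univ]
  have h1 : (0 : ℝ) < mu E w q (fun _ => none) := by
    rw [hmu]; positivity
  calc (0:ℝ) < mu E w q (fun _ => none) := h1
    _ ≤ Zs E w q := Finset.single_le_sum (fun f _ => mu_nonneg hw hq.le f) hmem

end Bridge

section KeyIdentity

lemma key_id_diag (E : V → V → Prop) (w : V → V → ℝ) (q : ℝ) (x : V) :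
    (q + Dd E w x) * Bs E w q x x
      = q * Zs E w q + ∑ y, wmx E w x y * Bs E w q y x := by
  classical
  have hBA : Bs E w q x x
      = ∑ f ∈ (allF : Finset (V → Option V)).filter (fun f => f x = none), mu E w q f := by
    unfold Bs
    refine Finset.sum_congr ?_ (fun _ _ => rfl)
    ext f
    simp [Finset.mem_filter, rt_self_iff]
  have hZ : Zs E w q
      = (∑ f ∈ (allF : Finset (V → Option V)).filter (fun f => f x = none), mu E w q f)
        + ∑ f ∈ (allF : Finset (V → Option V)).filter (fun f => ¬ (f x = none)), mu E w q f := by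
    unfold Zs
    exact (Finset.sum_filter_add_sum_filter_not allF _ _).symm
  have hsplit : ∀ y : V,
      (∑ f ∈ (allF : Finset (V → Option V)).filter (fun f => f x = none), mu E w q f)
        = (∑ f ∈ (allF : Finset (V → Option V)).filter (fun f => f x = none ∧ rt f y x),
            mu E w q f)
          + ∑ f ∈ (allF : Finset (V → Option V)).filter (fun f => f x = none ∧ ¬ rt f y x),
              mu E w q f := by
    intro y
    rw [← Finset.sum_filter_add_sum_filter_not
        ((allF : Finset (V → Option V)).filter (fun f => f x = none)) (fun f => rt f y x),
      Finset.filter_filter, Finset.filter_filter]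
  have hP1 : ∀ y : V,
      (∑ f ∈ (allF : Finset (V → Option V)).filter (fun f => f x = none ∧ rt f y x),
          mu E w q f) = Bs E w q y x := by
    intro y
    unfold Bs
    refine Finset.sum_congr ?_ (fun _ _ => rfl)
    ext f
    simp only [Finset.mem_filter, and_congr_right_iff]
    intro _
    exact ⟨fun h => h.2, fun h => ⟨h.2, h⟩⟩
  have hP2 : (∑ y, wmx E w x y
        * ∑ f ∈ (allF : Finset (V → Option V)).filter (fun f => f x = none ∧ ¬ rt f y x),
            mu E w q f)
      = q * ∑ f ∈ (allF : Finset (V → Option V)).filter (fun f => ¬ (f x = none)),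
          mu E w q f := by
    calc (∑ y, wmx E w x y
        * ∑ f ∈ (allF : Finset (V → Option V)).filter (fun f => f x = none ∧ ¬ rt f y x),
            mu E w q f)
        = ∑ y, ∑ f ∈ (allF : Finset (V → Option V)).filter
              (fun f => f x = none ∧ ¬ rt f y x), wmx E w x y * mu E w q f :=
          Finset.sum_congr rfl (fun y _ => Finset.mul_sum _ _ _)
      _ = ∑ p ∈ ((univ ×ˢ allF : Finset (V × (V → Option V))).filter
              (fun p => p.2 x = none ∧ ¬ rt p.2 p.1 x)), wmx E w x p.1 * mu E w q p.2 :=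
          (pair_sum (P := fun y f => f x = none ∧ ¬ rt f y x)
            (F := fun y f => wmx E w x y * mu E w q f)).symm
      _ = ∑ g ∈ (allF : Finset (V → Option V)).filter (fun g => ¬ (g x = none)),
            q * mu E w q g := (S1x E w q x).symm
      _ = q * ∑ f ∈ (allF : Finset (V → Option V)).filter (fun f => ¬ (f x = none)),
            mu E w q f := (Finset.mul_sum _ _ _).symm
  have e1 : ∀ y : V, wmx E w x y * Bs E w q x x
      = wmx E w x y * Bs E w q y x
        + wmx E w x y
          * ∑ f ∈ (allF : Finset (V → Option V)).filter (fun f => f x = none ∧ ¬ rt f y x),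
              mu E w q f := by
    intro y
    rw [hBA, hsplit y, mul_add, hP1 y]
  calc (q + Dd E w x) * Bs E w q x x
      = q * Bs E w q x x + ∑ y, wmx E w x y * Bs E w q x x := by
        rw [add_mul]
        congr 1
        unfold Dd
        rw [Finset.sum_mul]
    _ = q * Bs E w q x x + ((∑ y, wmx E w x y * Bs E w q y x)
          + ∑ y, wmx E w x y
            * ∑ f ∈ (allF : Finset (V → Option V)).filter (fun f => f x = none ∧ ¬ rt f y x),
                mu E w q f) := by
        rw [Finset.sum_congr rfl (fun y _ => e1 y), Finset.sum_add_distrib]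
    _ = q * Zs E w q + ∑ y, wmx E w x y * Bs E w q y x := by
        rw [hP2, hBA, hZ]
        ring

lemma key_id_off (E : V → V → Prop) (w : V → V → ℝ) (q : ℝ) {x z : V} (hzx : z ≠ x) :
    (q + Dd E w x) * Bs E w q x z = ∑ y, wmx E w x y * Bs E w q y z := by
  classical
  have h1 : q * Bs E w q x z
      = ∑ y, wmx E w x y
          * ∑ f ∈ (allF : Finset (V → Option V)).filter (fun f => rt f y z ∧ f x = none),
              mu E w q f := by
    calc q * Bs E w q x z
        = ∑ g ∈ (allF : Finset (V → Option V)).filter (fun g => rt g x z), q * mu E w q g := by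
          unfold Bs; rw [Finset.mul_sum]
      _ = ∑ p ∈ ((univ ×ˢ allF : Finset (V × (V → Option V))).filter
            (fun p => rt p.2 p.1 z ∧ p.2 x = none)), wmx E w x p.1 * mu E w q p.2 :=
          S1z E w q hzx
      _ = ∑ y, ∑ f ∈ (allF : Finset (V → Option V)).filter (fun f => rt f y z ∧ f x = none),
            wmx E w x y * mu E w q f :=
          pair_sum (P := fun y f => rt f y z ∧ f x = none)
            (F := fun y f => wmx E w x y * mu E w q f)
      _ = ∑ y, wmx E w x y
            * ∑ f ∈ (allF : Finset (V → Option V)).filter (fun f => rt f y z ∧ f x = none),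
                mu E w q f :=
          Finset.sum_congr rfl (fun y _ => (Finset.mul_sum _ _ _).symm)
  have h2 : ∀ y : V, Bs E w q x z
      = (∑ f ∈ (allF : Finset (V → Option V)).filter (fun f => rt f x z ∧ hits f y x),
          mu E w q f)
        + ∑ f ∈ (allF : Finset (V → Option V)).filter (fun f => rt f x z ∧ ¬ hits f y x),
            mu E w q f := by
    intro y
    unfold Bs
    rw [← Finset.sum_filter_add_sum_filter_not
        ((allF : Finset (V → Option V)).filter (fun f => rt f x z)) (fun f => hits f y x),
      Finset.filter_filter, Finset.filter_filter]
  have h3 : ∀ y : V,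
      (∑ f ∈ (allF : Finset (V → Option V)).filter (fun f => rt f x z ∧ hits f y x),
          mu E w q f)
        = ∑ f ∈ (allF : Finset (V → Option V)).filter
            (fun f => (rt f y z ∧ ¬ (f x = none)) ∧ hits f y x), mu E w q f := by
    intro y
    rw [S3 hzx y]
  have h4 : (∑ y, wmx E w x y
        * ∑ f ∈ (allF : Finset (V → Option V)).filter (fun f => rt f x z ∧ ¬ hits f y x),
            mu E w q f)
      = ∑ y, wmx E w x y
          * ∑ f ∈ (allF : Finset (V → Option V)).filter
              (fun f => (rt f y z ∧ ¬ (f x = none)) ∧ ¬ hits f y x), mu E w q f := by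
    calc (∑ y, wmx E w x y
        * ∑ f ∈ (allF : Finset (V → Option V)).filter (fun f => rt f x z ∧ ¬ hits f y x),
            mu E w q f)
        = ∑ y, ∑ f ∈ (allF : Finset (V → Option V)).filter
            (fun f => rt f x z ∧ ¬ hits f y x), wmx E w x y * mu E w q f :=
          Finset.sum_congr rfl (fun y _ => Finset.mul_sum _ _ _)
      _ = ∑ p ∈ ((univ ×ˢ allF : Finset (V × (V → Option V))).filter
            (fun p => rt p.2 x z ∧ ¬ hits p.2 p.1 x)), wmx E w x p.1 * mu E w q p.2 :=
          (pair_sum (P := fun y f => rt f x z ∧ ¬ hits f y x)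
            (F := fun y f => wmx E w x y * mu E w q f)).symm
      _ = ∑ p ∈ ((univ ×ˢ allF : Finset (V × (V → Option V))).filter
            (fun p => (rt p.2 p.1 z ∧ ¬ (p.2 x = none)) ∧ ¬ hits p.2 p.1 x)),
            wmx E w x p.1 * mu E w q p.2 := S2 E w q hzx
      _ = ∑ y, ∑ f ∈ (allF : Finset (V → Option V)).filter
            (fun f => (rt f y z ∧ ¬ (f x = none)) ∧ ¬ hits f y x),
            wmx E w x y * mu E w q f :=
          pair_sum (P := fun y f => (rt f y z ∧ ¬ (f x = none)) ∧ ¬ hits f y x)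
            (F := fun y f => wmx E w x y * mu E w q f)
      _ = ∑ y, wmx E w x y
            * ∑ f ∈ (allF : Finset (V → Option V)).filter
                (fun f => (rt f y z ∧ ¬ (f x = none)) ∧ ¬ hits f y x), mu E w q f :=
          Finset.sum_congr rfl (fun y _ => (Finset.mul_sum _ _ _).symm)
  have h5 : ∀ y : V, Bs E w q y z
      = (∑ f ∈ (allF : Finset (V → Option V)).filter (fun f => rt f y z ∧ f x = none),
          mu E w q f)
        + ((∑ f ∈ (allF : Finset (V → Option V)).filter
              (fun f => (rt f y z ∧ ¬ (f x = none)) ∧ hits f y x), mu E w q f)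
          + ∑ f ∈ (allF : Finset (V → Option V)).filter
              (fun f => (rt f y z ∧ ¬ (f x = none)) ∧ ¬ hits f y x), mu E w q f) := by
    intro y
    have s1 : Bs E w q y z
        = (∑ f ∈ (allF : Finset (V → Option V)).filter (fun f => rt f y z ∧ f x = none),
            mu E w q f)
          + ∑ f ∈ (allF : Finset (V → Option V)).filter (fun f => rt f y z ∧ ¬ (f x = none)),
              mu E w q f := by
      unfold Bs
      rw [← Finset.sum_filter_add_sum_filter_not
          ((allF : Finset (V → Option V)).filter (fun f => rt f y z)) (fun f => f x = none),
        Finset.filter_filter, Finset.filter_filter]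
    have s2 : (∑ f ∈ (allF : Finset (V → Option V)).filter
          (fun f => rt f y z ∧ ¬ (f x = none)), mu E w q f)
        = (∑ f ∈ (allF : Finset (V → Option V)).filter
            (fun f => (rt f y z ∧ ¬ (f x = none)) ∧ hits f y x), mu E w q f)
          + ∑ f ∈ (allF : Finset (V → Option V)).filter
              (fun f => (rt f y z ∧ ¬ (f x = none)) ∧ ¬ hits f y x), mu E w q f := by
      rw [← Finset.sum_filter_add_sum_filter_not
          ((allF : Finset (V → Option V)).filter (fun f => rt f y z ∧ ¬ (f x = none)))
          (fun f => hits f y x),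
        Finset.filter_filter, Finset.filter_filter]
    rw [s1, s2]
  have hexp1 : ∑ y, wmx E w x y * Bs E w q x z
      = ∑ y, (wmx E w x y
            * ∑ f ∈ (allF : Finset (V → Option V)).filter
                (fun f => (rt f y z ∧ ¬ (f x = none)) ∧ hits f y x), mu E w q f
          + wmx E w x y
            * ∑ f ∈ (allF : Finset (V → Option V)).filter
                (fun f => rt f x z ∧ ¬ hits f y x), mu E w q f) :=
    Finset.sum_congr rfl (fun y _ => by rw [h2 y, h3 y]; ring)
  calc (q + Dd E w x) * Bs E w q x z
      = q * Bs E w q x z + ∑ y, wmx E w x y * Bs E w q x z := by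
        rw [add_mul]
        congr 1
        unfold Dd
        rw [Finset.sum_mul]
    _ = (∑ y, wmx E w x y
          * ∑ f ∈ (allF : Finset (V → Option V)).filter (fun f => rt f y z ∧ f x = none),
              mu E w q f)
        + ((∑ y, wmx E w x y
            * ∑ f ∈ (allF : Finset (V → Option V)).filter
                (fun f => (rt f y z ∧ ¬ (f x = none)) ∧ hits f y x), mu E w q f)
          + ∑ y, wmx E w x y
            * ∑ f ∈ (allF : Finset (V → Option V)).filter
                (fun f => rt f x z ∧ ¬ hits f y x), mu E w q f) := by
        rw [h1, hexp1, Finset.sum_add_distrib]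
    _ = (∑ y, wmx E w x y
          * ∑ f ∈ (allF : Finset (V → Option V)).filter (fun f => rt f y z ∧ f x = none),
              mu E w q f)
        + ((∑ y, wmx E w x y
            * ∑ f ∈ (allF : Finset (V → Option V)).filter
                (fun f => (rt f y z ∧ ¬ (f x = none)) ∧ hits f y x), mu E w q f)
          + ∑ y, wmx E w x y
            * ∑ f ∈ (allF : Finset (V → Option V)).filter
                (fun f => (rt f y z ∧ ¬ (f x = none)) ∧ ¬ hits f y x), mu E w q f) := by
        rw [h4]
    _ = ∑ y, (wmx E w x y
          * ∑ f ∈ (allF : Finset (V → Option V)).filter (fun f => rt f y z ∧ f x = none),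
              mu E w q f
        + (wmx E w x y
            * ∑ f ∈ (allF : Finset (V → Option V)).filter
                (fun f => (rt f y z ∧ ¬ (f x = none)) ∧ hits f y x), mu E w q f
          + wmx E w x y
            * ∑ f ∈ (allF : Finset (V → Option V)).filter
                (fun f => (rt f y z ∧ ¬ (f x = none)) ∧ ¬ hits f y x), mu E w q f)) := by
        rw [Finset.sum_add_distrib, Finset.sum_add_distrib]
    _ = ∑ y, wmx E w x y * Bs E w q y z :=
        Finset.sum_congr rfl (fun y _ => by rw [h5 y]; ring)

lemma hStar (E : V → V → Prop) (w : V → V → ℝ) (q : ℝ) (x z : V) :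
    ∑ y, Mm E w q x y * Bs E w q y z = if x = z then q * Zs E w q else 0 := by
  have hexp : ∑ y, Mm E w q x y * Bs E w q y z
      = (q + Dd E w x) * Bs E w q x z - ∑ y, wmx E w x y * Bs E w q y z := by
    unfold Mm
    rw [Finset.sum_congr rfl (fun y (_ : y ∈ univ) => sub_mul _ _ _), Finset.sum_sub_distrib]
    congr 1
    simp only [ite_mul, zero_mul]
    rw [Finset.sum_ite_eq univ x (fun y => (q + Dd E w x) * Bs E w q y z)]
    simp
  by_cases hxz : x = z
  · subst hxz
    rw [hexp, key_id_diag E w q x, if_pos rfl]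
    ring
  · rw [hexp, key_id_off E w q (Ne.symm hxz), if_neg hxz]
    ring

end KeyIdentity

section Analysis

lemma hBM (E : V → V → Prop) (w : V → V → ℝ) {q : ℝ} (hq : q ≠ 0) (hZ : Zs E w q ≠ 0)
    (x z : V) :
    ∑ y, Bs E w q x y * Mm E w q y z = if x = z then q * Zs E w q else 0 := by
  classical
  let M : Matrix V V ℝ := Matrix.of (fun a b => Mm E w q a b)
  let B : Matrix V V ℝ := Matrix.of (fun a b => Bs E w q a b)
  have hMB : M * B = (q * Zs E w q) • (1 : Matrix V V ℝ) := by
    ext a b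
    rw [Matrix.mul_apply, Matrix.smul_apply, Matrix.one_apply]
    rw [show ∑ j, M a j * B j b = ∑ j, Mm E w q a j * Bs E w q j b from rfl, hStar E w q a b]
    by_cases h : a = b <;> simp [h]
  have hc : (q * Zs E w q) ≠ 0 := mul_ne_zero hq hZ
  have h1 : M * ((q * Zs E w q)⁻¹ • B) = 1 := by
    rw [Matrix.mul_smul, hMB, smul_smul, inv_mul_cancel₀ hc, one_smul]
  have h2 : ((q * Zs E w q)⁻¹ • B) * M = 1 := mul_eq_one_comm.1 h1
  have h3 : B * M = (q * Zs E w q) • (1 : Matrix V V ℝ) := by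
    have h4 := congrArg (fun A : Matrix V V ℝ => (q * Zs E w q) • A) h2
    simp only [Matrix.smul_mul, smul_smul, mul_inv_cancel₀ hc, one_smul] at h4
    exact h4
  have h5 := congrFun (congrFun h3 x) z
  rw [Matrix.mul_apply] at h5
  rw [show ∑ j, B x j * M j z = ∑ j, Bs E w q x j * Mm E w q j z from rfl] at h5
  rw [h5]
  rw [Matrix.smul_apply, Matrix.one_apply]
  by_cases h : x = z <;> simp [h]

lemma hasDerivAt_mu (E : V → V → Prop) (w : V → V → ℝ) (f : V → Option V) (q : ℝ) :
    HasDerivAt (fun p => mu E w p f) (muD E w q f) q := by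
  unfold mu muD
  simpa [mul_assoc] using (hasDerivAt_pow (nRoots f) q).mul_const (fWeight (wmx E w) f)

lemma hasDerivAt_Zs (E : V → V → Prop) (w : V → V → ℝ) (q : ℝ) :
    HasDerivAt (fun p => Zs E w p) (Zs' E w q) q := by
  unfold Zs Zs'
  exact HasDerivAt.fun_sum (fun f _ => hasDerivAt_mu E w f q)

lemma hasDerivAt_Bs (E : V → V → Prop) (w : V → V → ℝ) (q : ℝ) (x z : V) :
    HasDerivAt (fun p => Bs E w p x z) (Bs' E w q x z) q := by
  unfold Bs Bs'
  exact HasDerivAt.fun_sum (fun f _ => hasDerivAt_mu E w f q)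

lemma hD (E : V → V → Prop) (w : V → V → ℝ) (q : ℝ) (x z : V) :
    Bs E w q x z + ∑ y, Mm E w q x y * Bs' E w q y z
      = (Zs E w q + q * Zs' E w q) * (if x = z then 1 else 0) := by
  have hL : HasDerivAt (fun p => ∑ y, Mm E w p x y * Bs E w p y z)
      (∑ y, ((if x = y then 1 else 0) * Bs E w q y z + Mm E w q x y * Bs' E w q y z)) q := by
    apply HasDerivAt.fun_sum
    intro y _
    have hM : HasDerivAt (fun p => Mm E w p x y) (if x = y then 1 else 0) q := by
      unfold Mm
      by_cases h : x = y
      · simp only [if_pos h]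
        simpa using ((hasDerivAt_id q).add_const (Dd E w x)).sub_const (wmx E w x y)
      · simp only [if_neg h]
        simpa using (hasDerivAt_const q (0 - wmx E w x y))
    exact hM.mul (hasDerivAt_Bs E w q y z)
  have hR : HasDerivAt (fun p => if x = z then p * Zs E w p else 0)
      ((Zs E w q + q * Zs' E w q) * (if x = z then 1 else 0)) q := by
    by_cases h : x = z
    · simp only [if_pos h, mul_one]
      have := (hasDerivAt_id q).fun_mul (hasDerivAt_Zs E w q)
      simpa [mul_comm] using this
    · simp only [if_neg h, mul_zero]
      exact hasDerivAt_const q 0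
  have hfun : (fun p => ∑ y, Mm E w p x y * Bs E w p y z)
      = (fun p => if x = z then p * Zs E w p else 0) := by
    funext p
    exact hStar E w p x z
  rw [hfun] at hL
  have huniq := hL.unique hR
  rw [← huniq, Finset.sum_add_distrib]
  congr 1
  simp only [ite_mul, one_mul, zero_mul]
  rw [Finset.sum_ite_eq univ x (fun y => Bs E w q y z)]
  simp

lemma star2 (E : V → V → Prop) (w : V → V → ℝ) {q : ℝ} (hq : q ≠ 0) (hZ : Zs E w q ≠ 0)
    (x : V) :
    q * Zs E w q * Bs' E w q x x
      = (Zs E w q + q * Zs' E w q) * Bs E w q x x - ∑ y, Bs E w q x y * Bs E w q y x := by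
  have h1 : ∑ u, Bs E w q x u * (Bs E w q u x + ∑ y, Mm E w q u y * Bs' E w q y x)
      = ∑ u, Bs E w q x u * ((Zs E w q + q * Zs' E w q) * (if u = x then 1 else 0)) :=
    Finset.sum_congr rfl (fun u _ => by rw [hD E w q u x])
  have hL : ∑ u, Bs E w q x u * (Bs E w q u x + ∑ y, Mm E w q u y * Bs' E w q y x)
      = (∑ y, Bs E w q x y * Bs E w q y x) + q * Zs E w q * Bs' E w q x x := by
    rw [Finset.sum_congr rfl (fun u (_ : u ∈ univ) =>
      mul_add (Bs E w q x u) (Bs E w q u x) (∑ y, Mm E w q u y * Bs' E w q y x)),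
      Finset.sum_add_distrib]
    congr 1
    calc ∑ u, Bs E w q x u * ∑ y, Mm E w q u y * Bs' E w q y x
        = ∑ u, ∑ y, Bs E w q x u * (Mm E w q u y * Bs' E w q y x) :=
          Finset.sum_congr rfl (fun u _ => Finset.mul_sum _ _ _)
      _ = ∑ y, ∑ u, Bs E w q x u * (Mm E w q u y * Bs' E w q y x) := Finset.sum_comm
      _ = ∑ y, (∑ u, Bs E w q x u * Mm E w q u y) * Bs' E w q y x := by
          refine Finset.sum_congr rfl (fun y _ => ?_)
          rw [Finset.sum_mul]
          exact Finset.sum_congr rfl (fun u _ => by ring)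
      _ = ∑ y, (if x = y then q * Zs E w q else 0) * Bs' E w q y x :=
          Finset.sum_congr rfl (fun y _ => by rw [hBM E w hq hZ x y])
      _ = q * Zs E w q * Bs' E w q x x := by
          simp only [ite_mul, zero_mul]
          rw [Finset.sum_ite_eq univ x (fun y => q * Zs E w q * Bs' E w q y x)]
          simp
  have hR : ∑ u, Bs E w q x u * ((Zs E w q + q * Zs' E w q) * (if u = x then 1 else 0))
      = (Zs E w q + q * Zs' E w q) * Bs E w q x x := by
    rw [Finset.sum_congr rfl (fun u (_ : u ∈ univ) => by
      rw [mul_ite, mul_ite, mul_one, mul_zero, mul_zero] :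
        ∀ u ∈ univ, Bs E w q x u * ((Zs E w q + q * Zs' E w q) * (if u = x then 1 else 0))
          = if u = x then Bs E w q x u * (Zs E w q + q * Zs' E w q) else 0)]
    rw [Finset.sum_ite_eq' univ x (fun u => Bs E w q x u * (Zs E w q + q * Zs' E w q))]
    simp [mul_comm]
  rw [hL, hR] at h1
  linarith [h1]

end Analysis

end RFAux

set_option maxHeartbeats 1000000 in
/-- **Monotonicity of rooting probabilities.** The map `q ↦ P(x ∈ R_q)` is differentiable
on `(0,∞)` with `0 ≤ d/dq P(x ∈ R_q) ≤ (1/q)·P(x ∈ R_q)`; in particular it is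
non-decreasing on `(0,∞)`. -/
theorem rooting_probability_monotone (E : V → V → Prop) (w : V → V → ℝ)
    (hw : ∀ a b : V, 0 ≤ w a b) (x : V) :
    (∀ q : ℝ, 0 < q → DifferentiableAt ℝ (fun p => rootProb E w p x) q) ∧
    (∀ q : ℝ, 0 < q →
      0 ≤ deriv (fun p => rootProb E w p x) q ∧
      deriv (fun p => rootProb E w p x) q ≤ 1 / q * rootProb E w q x) ∧
    MonotoneOn (fun p => rootProb E w p x) (Set.Ioi 0) := by
  classical
  haveI : Nonempty V := ⟨x⟩
  have hfun : (fun p => rootProb E w p x) = (fun p => RFAux.Bs E w p x x / RFAux.Zs E w p) :=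
    funext (fun p => RFAux.rootProb_eq E w p x)
  have hderiv : ∀ q : ℝ, 0 < q → HasDerivAt (fun p => rootProb E w p x)
      ((RFAux.Zs E w q * RFAux.Bs E w q x x
          - ∑ y, RFAux.Bs E w q x y * RFAux.Bs E w q y x) / (q * RFAux.Zs E w q ^ 2)) q := by
    intro q hq
    have hZpos : 0 < RFAux.Zs E w q := RFAux.Zs_pos hw hq
    have hZ : RFAux.Zs E w q ≠ 0 := ne_of_gt hZpos
    have h := (RFAux.hasDerivAt_Bs E w q x x).fun_div (RFAux.hasDerivAt_Zs E w q) hZ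
    rw [hfun]
    convert h using 1
    case e'_4 => rfl
    case e'_5 => rfl
    have h2 := RFAux.star2 E w (ne_of_gt hq) hZ x
    rw [div_eq_div_iff (by positivity) (by positivity)]
    linear_combination (-(RFAux.Zs E w q ^ 2)) * h2
  have hbounds : ∀ q : ℝ, 0 < q →
      0 ≤ deriv (fun p => rootProb E w p x) q ∧
      deriv (fun p => rootProb E w p x) q ≤ 1 / q * rootProb E w q x := by
    intro q hq
    have hZpos : 0 < RFAux.Zs E w q := RFAux.Zs_pos hw hq
    have hZ : RFAux.Zs E w q ≠ 0 := ne_of_gt hZpos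
    have hd : deriv (fun p => rootProb E w p x) q
        = (RFAux.Zs E w q * RFAux.Bs E w q x x
            - ∑ y, RFAux.Bs E w q x y * RFAux.Bs E w q y x) / (q * RFAux.Zs E w q ^ 2) :=
      (hderiv q hq).deriv
    have hS_nonneg : 0 ≤ ∑ y, RFAux.Bs E w q x y * RFAux.Bs E w q y x :=
      Finset.sum_nonneg (fun y _ =>
        mul_nonneg (RFAux.Bs_nonneg hw hq.le x y) (RFAux.Bs_nonneg hw hq.le y x))
    have hS_le : ∑ y, RFAux.Bs E w q x y * RFAux.Bs E w q y x
        ≤ RFAux.Zs E w q * RFAux.Bs E w q x x := by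
      calc ∑ y, RFAux.Bs E w q x y * RFAux.Bs E w q y x
          ≤ ∑ y, RFAux.Bs E w q x y * RFAux.Bs E w q x x :=
            Finset.sum_le_sum (fun y _ => mul_le_mul_of_nonneg_left
              (RFAux.Bs_le_diag hw hq.le x y) (RFAux.Bs_nonneg hw hq.le x y))
        _ = (∑ y, RFAux.Bs E w q x y) * RFAux.Bs E w q x x := (Finset.sum_mul _ _ _).symm
        _ = RFAux.Zs E w q * RFAux.Bs E w q x x := by rw [RFAux.Bs_row_sum]
    constructor
    · rw [hd]
      apply div_nonneg (by linarith) (by positivity)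
    · rw [hd]
      have e : 1 / q * rootProb E w q x
          = RFAux.Zs E w q * RFAux.Bs E w q x x / (q * RFAux.Zs E w q ^ 2) := by
        rw [RFAux.rootProb_eq]
        field_simp
      rw [e]
      exact (div_le_div_iff_of_pos_right (by positivity)).2 (by linarith)
  refine ⟨fun q hq => (hderiv q hq).differentiableAt, hbounds, ?_⟩
  apply monotoneOn_of_deriv_nonneg (convex_Ioi 0)
  · intro q hq
    exact ((hderiv q hq).differentiableAt).continuousAt.continuousWithinAt
  · rw [interior_Ioi]
    intro q hq
    exact ((hderiv q hq).differentiableAt).differentiableWithinAt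
  · rw [interior_Ioi]
    intro q hq
    exact (hbounds q hq).1

end
end
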